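/- Let C ∈ ℝ (C = f(d)ᵀβ, the maximal value of the linear predictor over the design region). For z > 0 define w_p*(z) := 2 / ( p + √( (p−2)² + 4·(p−1)·(1 + (m/b)·e^C)/(1 + (m/b)·e^{C−z}) ) ) and w₁*(z) := (1 − w_p*(z))/(p−1). Then the equation 0 = m·( (p−1)·w₁*(z)·e^{C−z} + w_p*(z)·e^{C} )·( z·(p−1)·w₁*(z) − 2 ) + b·( z·p·w₁*(z) − 2 ) has a unique solution z* in the interval (0,∞), and this solution satisfies 2·(p−1)/p < z* < 2·p/(p−1). -/

import Mathlib

open Real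

/-- Auxiliary definition: the weight function `w_p*`. -/
noncomputable def wpAux (c C P z : ℝ) : ℝ :=
  2 / (P + Real.sqrt ((P - 2) ^ 2 +
    4 * (P - 1) * ((1 + c * Real.exp C) / (1 + c * Real.exp (C - z)))))

lemma wpAux_pos (c C P : ℝ) (h2 : 2 ≤ P) (z : ℝ) : 0 < wpAux c C P z := by
  unfold wpAux
  have hs := Real.sqrt_nonneg ((P - 2) ^ 2 +
    4 * (P - 1) * ((1 + c * Real.exp C) / (1 + c * Real.exp (C - z))))
  apply div_pos two_pos
  linarith

lemma wpAux_lt (c C P : ℝ) (hc : 0 < c) (h2 : 2 ≤ P) {z : ℝ} (hz : 0 < z) :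
    P * wpAux c C P z < 1 := by
  have hden : 0 < 1 + c * Real.exp (C - z) := by positivity
  have hR : 1 < (1 + c * Real.exp C) / (1 + c * Real.exp (C - z)) := by
    rw [lt_div_iff₀ hden]
    have := Real.exp_lt_exp.mpr (show C - z < C by linarith)
    nlinarith
  have hD : P ^ 2 < (P - 2) ^ 2 +
      4 * (P - 1) * ((1 + c * Real.exp C) / (1 + c * Real.exp (C - z))) := by
    nlinarith
  have hs : P < Real.sqrt ((P - 2) ^ 2 +
      4 * (P - 1) * ((1 + c * Real.exp C) / (1 + c * Real.exp (C - z)))) :=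
    (Real.lt_sqrt (by linarith)).mpr hD
  unfold wpAux
  rw [mul_div_assoc', mul_comm P 2, div_lt_one (by linarith)]
  linarith

lemma wpAux_anti (c C P : ℝ) (hc : 0 < c) (h2 : 2 ≤ P) {z₁ z₂ : ℝ} (h : z₁ < z₂) :
    wpAux c C P z₂ < wpAux c C P z₁ := by
  have hden1 : 0 < 1 + c * Real.exp (C - z₁) := by positivity
  have hden2 : 0 < 1 + c * Real.exp (C - z₂) := by positivity
  have hA : 0 < 1 + c * Real.exp C := by positivity
  have hdd : 1 + c * Real.exp (C - z₂) < 1 + c * Real.exp (C - z₁) := by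
    have := Real.exp_lt_exp.mpr (show C - z₂ < C - z₁ by linarith)
    nlinarith
  have hRR : (1 + c * Real.exp C) / (1 + c * Real.exp (C - z₁)) <
      (1 + c * Real.exp C) / (1 + c * Real.exp (C - z₂)) :=
    div_lt_div_of_pos_left hA hden2 hdd
  have hR1 : 0 < (1 + c * Real.exp C) / (1 + c * Real.exp (C - z₁)) :=
    div_pos hA hden1
  have hD : (P - 2) ^ 2 + 4 * (P - 1) * ((1 + c * Real.exp C) / (1 + c * Real.exp (C - z₁))) <
      (P - 2) ^ 2 + 4 * (P - 1) * ((1 + c * Real.exp C) / (1 + c * Real.exp (C - z₂))) := by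
    nlinarith
  have hD1 : 0 ≤ (P - 2) ^ 2 +
      4 * (P - 1) * ((1 + c * Real.exp C) / (1 + c * Real.exp (C - z₁))) := by
    nlinarith
  have hs := Real.sqrt_lt_sqrt hD1 hD
  have hs1 := Real.sqrt_nonneg ((P - 2) ^ 2 +
      4 * (P - 1) * ((1 + c * Real.exp C) / (1 + c * Real.exp (C - z₁))))
  unfold wpAux
  exact div_lt_div_of_pos_left two_pos (by linarith) (by linarith)

lemma wpAux_cont (c C P : ℝ) (hc : 0 < c) (h2 : 2 ≤ P) : Continuous (wpAux c C P) := by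
  unfold wpAux
  have hden : ∀ z : ℝ, 0 < 1 + c * Real.exp (C - z) := fun z => by positivity
  apply Continuous.div continuous_const
  · apply continuous_const.add
    apply Real.continuous_sqrt.comp
    apply continuous_const.add
    apply Continuous.mul continuous_const
    exact Continuous.div continuous_const (by fun_prop) (fun z => (hden z).ne')
  · intro z
    have := Real.sqrt_nonneg ((P - 2) ^ 2 +
      4 * (P - 1) * ((1 + c * Real.exp C) / (1 + c * Real.exp (C - z))))
    exact ne_of_gt (by linarith)

/-- At a root of the equation (in cleared-denominator form), the factor `h` is negative and
`K` is positive. -/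
lemma sign_at_root (m b P E h K zw : ℝ) (hm : 0 < m) (hb : 0 < b) (hP : 0 < P - 1)
    (hE : 0 < E) (hzw : 0 < zw) (hdiff : K - h * (P - 1) = zw)
    (heq : m * E * h * (P - 1) + b * K = 0) : h < 0 ∧ 0 < K := by
  rcases lt_or_ge h 0 with hh | hh
  · refine ⟨hh, ?_⟩
    have h1 : 0 < m * E * (-h) * (P - 1) :=
      mul_pos (mul_pos (mul_pos hm hE) (neg_pos.mpr hh)) hP
    nlinarith
  · exfalso
    have h1 : 0 ≤ m * E * h * (P - 1) :=
      mul_nonneg (mul_nonneg (mul_pos hm hE).le hh) hP.le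
    have h2 : 0 ≤ h * (P - 1) := mul_nonneg hh hP.le
    have hK : 0 < K := by linarith
    nlinarith [mul_pos hb hK]

/-- Two distinct roots lead to a contradiction. -/
lemma uniq_core (m b P E₁ E₂ h₁ h₂ K₁ K₂ : ℝ) (hm : 0 < m) (hb : 0 < b) (hP : 0 < P - 1)
    (hE2 : 0 < E₂) (hE : E₂ < E₁) (hh1 : h₁ < 0) (hh12 : h₁ < h₂) (hh2 : h₂ < 0)
    (hK : K₁ < K₂)
    (e₁ : m * E₁ * h₁ * (P - 1) + b * K₁ = 0)
    (e₂ : m * E₂ * h₂ * (P - 1) + b * K₂ = 0) : False := by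
  nlinarith [mul_pos (mul_pos hm (sub_pos.2 hE)) (mul_pos (neg_pos.2 hh1) hP),
    mul_pos (mul_pos hm hE2) (mul_pos (sub_pos.2 hh12) hP),
    mul_pos hb (sub_pos.2 hK)]

set_option maxHeartbeats 1000000 in
/-- The equation determining the optimal distance `z*` for the D-optimal design of the
Poisson-Gamma model has a unique solution in `(0,∞)`, and this solution satisfies
`2(p−1)/p < z* < 2p/(p−1)`. -/
theorem D_optimal_distance_poisson_gamma
    (b m : ℝ) (hb : 0 < b) (hm : 0 < m)
    (p : ℕ) (hp : 2 ≤ p) (C : ℝ)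
    (wpf w1f : ℝ → ℝ)
    (hwpf : ∀ z, wpf z = 2 / ((p : ℝ) + Real.sqrt (((p : ℝ) - 2) ^ 2 +
      4 * ((p : ℝ) - 1) *
        ((1 + (m / b) * Real.exp C) / (1 + (m / b) * Real.exp (C - z))))))
    (hw1f : ∀ z, w1f z = (1 - wpf z) / ((p : ℝ) - 1)) :
    (∃! z : ℝ, 0 < z ∧
      0 = m * (((p : ℝ) - 1) * w1f z * Real.exp (C - z) + wpf z * Real.exp C) *
            (z * ((p : ℝ) - 1) * w1f z - 2)
          + b * (z * (p : ℝ) * w1f z - 2)) ∧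
    ∀ z : ℝ, 0 < z →
      0 = m * (((p : ℝ) - 1) * w1f z * Real.exp (C - z) + wpf z * Real.exp C) *
            (z * ((p : ℝ) - 1) * w1f z - 2)
          + b * (z * (p : ℝ) * w1f z - 2) →
      2 * ((p : ℝ) - 1) / (p : ℝ) < z ∧ z < 2 * (p : ℝ) / ((p : ℝ) - 1) := by
  have hP2 : (2 : ℝ) ≤ (p : ℝ) := by exact_mod_cast hp
  set P : ℝ := (p : ℝ) with hPdef
  have hP0 : 0 < P := by linarith
  have hP1 : 0 < P - 1 := by linarith
  have hc : 0 < m / b := div_pos hm hb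
  -- identify wpf with wpAux
  have hwp : ∀ z, wpf z = wpAux (m / b) C P z := fun z => by rw [hwpf z]; rfl
  have hwpos : ∀ z, 0 < wpf z := fun z => by rw [hwp z]; exact wpAux_pos _ _ _ hP2 z
  have hwlt : ∀ z, 0 < z → P * wpf z < 1 := fun z hz => by
    rw [hwp z]; exact wpAux_lt _ _ _ hc hP2 hz
  have hanti : ∀ z₁ z₂, z₁ < z₂ → wpf z₂ < wpf z₁ := fun z₁ z₂ h => by
    rw [hwp z₁, hwp z₂]; exact wpAux_anti _ _ _ hc hP2 h
  have hwlt1 : ∀ z, 0 < z → wpf z < 1 := fun z hz => by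
    have h1 := hwlt z hz; have h2 := hwpos z; nlinarith
  -- the main function and its cleared-denominator form
  set F : ℝ → ℝ := fun z =>
    m * ((P - 1) * w1f z * Real.exp (C - z) + wpf z * Real.exp C) *
      (z * (P - 1) * w1f z - 2) + b * (z * P * w1f z - 2) with hFdef
  set G : ℝ → ℝ := fun z =>
    m * ((1 - wpf z) * Real.exp (C - z) + wpf z * Real.exp C) *
      (z * (1 - wpf z) - 2) * (P - 1) + b * (z * P * (1 - wpf z) - 2 * (P - 1)) with hGdef
  have hFG : ∀ z, F z = G z / (P - 1) := by
    intro z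
    simp only [hFdef, hGdef, hw1f z]
    field_simp
  have hEpos : ∀ z, 0 < z → 0 < (1 - wpf z) * Real.exp (C - z) + wpf z * Real.exp C := by
    intro z hz
    have h1 := hwpos z
    have h2 := hwlt1 z hz
    have h3 := Real.exp_pos (C - z)
    have h4 := Real.exp_pos C
    nlinarith
  -- at any positive root: h < 0 < K
  have hroot : ∀ z, 0 < z → F z = 0 →
      z * (1 - wpf z) - 2 < 0 ∧ 0 < z * P * (1 - wpf z) - 2 * (P - 1) := by
    intro z hz hFz
    have hGz : G z = 0 := by
      have := hFG z
      rw [hFz] at this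
      field_simp at this
      linarith [this]
    have hGz' : m * ((1 - wpf z) * Real.exp (C - z) + wpf z * Real.exp C) *
        (z * (1 - wpf z) - 2) * (P - 1) +
        b * (z * P * (1 - wpf z) - 2 * (P - 1)) = 0 := by
      simpa [hGdef] using hGz
    have hzw : 0 < z * (1 - wpf z) := by
      have := hwlt1 z hz; nlinarith
    exact sign_at_root m b P _ _ _ (z * (1 - wpf z)) hm hb hP1 (hEpos z hz) hzw
      (by ring) hGz'
  -- monotonicity facts for two points
  have hEmono : ∀ z₁ z₂, 0 < z₁ → z₁ < z₂ →
      (1 - wpf z₂) * Real.exp (C - z₂) + wpf z₂ * Real.exp C <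
      (1 - wpf z₁) * Real.exp (C - z₁) + wpf z₁ * Real.exp C := by
    intro z₁ z₂ hz1 h12
    have hw12 := hanti z₁ z₂ h12
    have hw1lt := hwlt1 z₁ hz1
    have hx : Real.exp (C - z₂) < Real.exp (C - z₁) := Real.exp_lt_exp.mpr (by linarith)
    have hxc : Real.exp (C - z₂) < Real.exp C := Real.exp_lt_exp.mpr (by linarith)
    nlinarith [mul_pos (sub_pos.2 hw1lt) (sub_pos.2 hx),
      mul_pos (sub_pos.2 hw12) (sub_pos.2 hxc)]
  have hhmono : ∀ z₁ z₂, 0 < z₁ → z₁ < z₂ →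
      z₁ * (1 - wpf z₁) - 2 < z₂ * (1 - wpf z₂) - 2 := by
    intro z₁ z₂ hz1 h12
    have hw12 := hanti z₁ z₂ h12
    have hw1lt := hwlt1 z₁ hz1
    nlinarith [mul_pos (sub_pos.2 h12) (sub_pos.2 (show wpf z₂ < 1 by linarith)),
      mul_pos hz1 (sub_pos.2 hw12)]
  have hKmono : ∀ z₁ z₂, 0 < z₁ → z₁ < z₂ →
      z₁ * P * (1 - wpf z₁) - 2 * (P - 1) < z₂ * P * (1 - wpf z₂) - 2 * (P - 1) := by
    intro z₁ z₂ hz1 h12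
    have hw12 := hanti z₁ z₂ h12
    have hw1lt := hwlt1 z₁ hz1
    nlinarith [mul_pos (mul_pos (sub_pos.2 h12) hP0)
        (sub_pos.2 (show wpf z₂ < 1 by linarith)),
      mul_pos (mul_pos hz1 hP0) (sub_pos.2 hw12)]
  -- uniqueness of roots
  have huniq : ∀ z₁ z₂, 0 < z₁ → 0 < z₂ → F z₁ = 0 → F z₂ = 0 → z₁ = z₂ := by
    intro z₁ z₂ hz1 hz2 hF1 hF2
    have key : ∀ y₁ y₂, 0 < y₁ → y₁ < y₂ → F y₁ = 0 → F y₂ = 0 → False := by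
      intro y₁ y₂ hy1 h12 hG1' hG2'
      have hy2 : 0 < y₂ := lt_trans hy1 h12
      obtain ⟨hh1, hK1⟩ := hroot y₁ hy1 hG1'
      obtain ⟨hh2, hK2⟩ := hroot y₂ hy2 hG2'
      have hG1 : m * ((1 - wpf y₁) * Real.exp (C - y₁) + wpf y₁ * Real.exp C) *
          (y₁ * (1 - wpf y₁) - 2) * (P - 1) +
          b * (y₁ * P * (1 - wpf y₁) - 2 * (P - 1)) = 0 := by
        have := hFG y₁; rw [hG1'] at this
        have h0 : G y₁ = 0 := by
          field_simp at this; linarith [this]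
        simpa [hGdef] using h0
      have hG2 : m * ((1 - wpf y₂) * Real.exp (C - y₂) + wpf y₂ * Real.exp C) *
          (y₂ * (1 - wpf y₂) - 2) * (P - 1) +
          b * (y₂ * P * (1 - wpf y₂) - 2 * (P - 1)) = 0 := by
        have := hFG y₂; rw [hG2'] at this
        have h0 : G y₂ = 0 := by
          field_simp at this; linarith [this]
        simpa [hGdef] using h0
      exact uniq_core m b P _ _ _ _ _ _ hm hb hP1 (hEpos y₂ hy2)
        (hEmono y₁ y₂ hy1 h12) hh1 (hhmono y₁ y₂ hy1 h12) hh2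
        (hKmono y₁ y₂ hy1 h12) hG1 hG2
    rcases lt_trichotomy z₁ z₂ with h | h | h
    · exact absurd (key z₁ z₂ hz1 h hF1 hF2) not_false
    · exact h
    · exact absurd (key z₂ z₁ hz2 h hF2 hF1) not_false
  -- existence via IVT
  have hwcont : Continuous wpf := by
    have : wpf = wpAux (m / b) C P := funext hwp
    rw [this]; exact wpAux_cont _ _ _ hc hP2
  have hw1cont : Continuous w1f := by
    have : w1f = fun z => (1 - wpf z) / (P - 1) := funext hw1f
    rw [this]
    exact (continuous_const.sub hwcont).div_const _
  have hFcont : Continuous F := by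
    rw [hFdef]
    have hexp : Continuous fun z : ℝ => Real.exp (C - z) := by fun_prop
    fun_prop
  set a : ℝ := 2 * (P - 1) / P with hadef
  set b' : ℝ := 2 * P / (P - 1) with hbdef
  have ha0 : 0 < a := by positivity
  have haP : a * P = 2 * (P - 1) := div_mul_cancel₀ _ hP0.ne'
  have hb'P : b' * (P - 1) = 2 * P := div_mul_cancel₀ _ hP1.ne'
  have ha2 : a < 2 := by nlinarith
  have hb'2 : 2 < b' := by nlinarith
  have hab : a < b' := by linarith
  have hb'0 : 0 < b' := by linarith
  -- F a < 0
  have hFa : F a < 0 := by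
    have hw := hwpos a
    have hwl := hwlt1 a ha0
    have hE := hEpos a ha0
    have hh : a * (1 - wpf a) - 2 < 0 := by nlinarith [mul_pos ha0 hw]
    have hKa : a * P * (1 - wpf a) - 2 * (P - 1) < 0 := by
      have h1 : a * P * (1 - wpf a) = 2 * (P - 1) * (1 - wpf a) := by
        rw [show a * P * (1 - wpf a) = (a * P) * (1 - wpf a) from by ring, haP]
      nlinarith [mul_pos hP1 hw]
    have hGa : G a < 0 := by
      have hG : G a = m * ((1 - wpf a) * Real.exp (C - a) + wpf a * Real.exp C) *
          (a * (1 - wpf a) - 2) * (P - 1) +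
          b * (a * P * (1 - wpf a) - 2 * (P - 1)) := by simp [hGdef]
      rw [hG]
      nlinarith [mul_pos (mul_pos (mul_pos hm hE) (neg_pos.2 hh)) hP1,
        mul_pos hb (neg_pos.2 hKa)]
    rw [hFG a]
    exact div_neg_of_neg_of_pos hGa hP1
  -- F b' > 0
  have hFb : 0 < F b' := by
    have hw := hwpos b'
    have hwP := hwlt b' hb'0
    have hE := hEpos b' hb'0
    have hh : 0 < b' * (1 - wpf b') - 2 := by
      have h1 : b' * (1 - wpf b') * (P - 1) = 2 * P * (1 - wpf b') := by
        rw [show b' * (1 - wpf b') * (P - 1) = (b' * (P - 1)) * (1 - wpf b') from by ring,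
          hb'P]
      have h2 : 2 * (P - 1) < b' * (1 - wpf b') * (P - 1) := by
        rw [h1]; nlinarith
      nlinarith
    have hKb : 0 < b' * P * (1 - wpf b') - 2 * (P - 1) := by
      have h1 : b' * P * (1 - wpf b') * (P - 1) = 2 * P * P * (1 - wpf b') := by
        rw [show b' * P * (1 - wpf b') * (P - 1) = (b' * (P - 1)) * (P * (1 - wpf b'))
          from by ring, hb'P]; ring
      have h2 : 2 * (P - 1) * (P - 1) < b' * P * (1 - wpf b') * (P - 1) := by
        rw [h1]; nlinarith [mul_pos hP0 (show 0 < 1 - P * wpf b' by linarith)]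
      nlinarith
    have hGb : 0 < G b' := by
      have hG : G b' = m * ((1 - wpf b') * Real.exp (C - b') + wpf b' * Real.exp C) *
          (b' * (1 - wpf b') - 2) * (P - 1) +
          b * (b' * P * (1 - wpf b') - 2 * (P - 1)) := by simp [hGdef]
      rw [hG]
      nlinarith [mul_pos (mul_pos (mul_pos hm hE) hh) hP1, mul_pos hb hKb]
    rw [hFG b']
    exact div_pos hGb hP1
  obtain ⟨z₀, hz₀mem, hFz₀⟩ := intermediate_value_Ioo hab.le hFcont.continuousOn
    (Set.mem_Ioo.mpr ⟨hFa, hFb⟩)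
  have hz₀pos : 0 < z₀ := lt_trans ha0 hz₀mem.1
  constructor
  · refine ⟨z₀, ⟨hz₀pos, hFz₀.symm⟩, ?_⟩
    intro y ⟨hy0, hyeq⟩
    exact huniq y z₀ hy0 hz₀pos hyeq.symm hFz₀
  · intro z hz hzeq
    obtain ⟨hh, hK⟩ := hroot z hz hzeq.symm
    have hw := hwpos z
    have hwP := hwlt z hz
    constructor
    · rw [div_lt_iff₀ hP0]
      nlinarith [mul_pos (mul_pos hz hP0) hw]
    · rw [lt_div_iff₀ hP1]
      nlinarith [mul_pos hz (show 0 < 1 - P * wpf z by linarith)]
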